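/- (Warm-up lemma.) There is a universal constant c > 0 such that the following holds. Let n ≥ 2, let μ be a random permutation of {1,...,n}, fix j ∈ {1,...,n}, and for each i ≤ j let c(i,j) be a collision of i and j independent of μ. Then (1/j) Σ_{i=1}^{j} ENT(μ c(i,j)) ≤ ENT(μ) − c · E[ENT(μ, j)] / log n. -/

import Mathlib

open Finset

/-
We index cards/positions by `Fin n` (0-indexed); the paper's index `j ∈ {1,…,n}`
corresponds to `j - 1 : Fin n` here, so `ENT(μ, j)` is the expected relative entropy of
the conditional law of `μ⁻¹(j)` given `F_{j+1}`, a distribution on `j + 1` values, and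
the average over `i ≤ j` is over `j + 1` indices.  A random permutation is described by
its law `p : Equiv.Perm (Fin n) → ℝ`.
-/

/-- Relative entropy `ENT(p) = Σ_i p_i log(|V| p_i)` of a distribution on a finite set,
with the convention `0 log 0 = 0` (automatic since `Real.log 0 = 0`). -/
noncomputable def relEnt {V : Type*} [Fintype V] (p : V → ℝ) : ℝ :=
  ∑ x, p x * Real.log ((Fintype.card V : ℝ) * p x)

/-- `p` is a probability distribution on the finite set `V`. -/
def IsDist {V : Type*} [Fintype V] (p : V → ℝ) : Prop :=
  (∀ x, 0 ≤ p x) ∧ (∑ x, p x) = 1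

/-- `P(π⁻¹(j) = σ⁻¹(j) for all j ≥ k)` when `π` is a random permutation with law `p`. -/
noncomputable def tailProb {n : ℕ} (p : Equiv.Perm (Fin n) → ℝ) (k : ℕ)
    (σ : Equiv.Perm (Fin n)) : ℝ :=
  ∑ τ ∈ Finset.univ.filter (fun τ : Equiv.Perm (Fin n) =>
      ∀ j : Fin n, k ≤ (j : ℕ) → τ.symm j = σ.symm j), p τ

/-- `E[ENT(π, k)] = E[ENT(π⁻¹(k) | F_{k+1})]`: the expected relative entropy of the
conditional distribution of `π⁻¹(k)` given `σ(π⁻¹(k+1),…)`, viewed as a distribution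
on the `k + 1` values not occupied by positions above `k`. -/
noncomputable def expCondEnt {n : ℕ} (p : Equiv.Perm (Fin n) → ℝ) (k : ℕ) : ℝ :=
  ∑ σ, p σ * Real.log (((k : ℝ) + 1) * (tailProb p k σ / tailProb p (k + 1) σ))

/-- The law of `μ c(i,j)` (apply `μ` first, then the collision), where `μ ~ p` and
`c(i,j)` is a collision of `i` and `j` (identity w.p. 1/2, transposition w.p. 1/2)
independent of `μ`. -/
noncomputable def collideLaw {n : ℕ} (p : Equiv.Perm (Fin n) → ℝ) (i j : Fin n) :
    Equiv.Perm (Fin n) → ℝ :=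
  fun g => (p g + p (Equiv.swap i j * g)) / 2

open Real

noncomputable def gfun (α : ℝ) : ℝ → ℝ := fun x =>
  Real.log 2 + (1 - α) * Real.log x - Real.log (1 + x) - (1/2 - α) * (1 - 1/x)

lemma gfun_hasDeriv (α x : ℝ) (hx : 0 < x) :
    HasDerivAt (gfun α) ((1 - α) * x⁻¹ - (1 + x)⁻¹ - (1/2 - α) * (x^2)⁻¹) x := by
  have h1 : HasDerivAt (fun y : ℝ => Real.log y) x⁻¹ x := Real.hasDerivAt_log hx.ne'
  have h2 : HasDerivAt (fun y : ℝ => 1 + y) 1 x := (hasDerivAt_id x).const_add 1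
  have h3 : HasDerivAt (fun y : ℝ => Real.log (1 + y)) (1 / (1 + x)) x :=
    h2.log (by linarith)
  have h4 : HasDerivAt (fun y : ℝ => 1/y) (-(x^2)⁻¹) x := by
    simpa using (hasDerivAt_inv hx.ne')
  have h5 : HasDerivAt (fun y : ℝ => 1 - 1/y) ((x^2)⁻¹) x := by
    simpa using (h4.const_sub 1)
  have := ((h1.const_mul (1 - α)).const_add (Real.log 2)).sub h3 |>.sub (h5.const_mul (1/2 - α))
  have e : (1:ℝ) / (1 + x) = (1 + x)⁻¹ := one_div _
  rw [e] at this
  exact this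

lemma gfun_deriv_eq (α x : ℝ) (hx : 0 < x) :
    (1 - α) * x⁻¹ - (1 + x)⁻¹ - (1/2 - α) * (x^2)⁻¹
      = ((x - 1) * (1/2 - α * (1 + x))) / (x^2 * (1 + x)) := by
  field_simp
  ring

lemma gfun_one (α : ℝ) : gfun α 1 = 0 := by
  simp [gfun]
  norm_num

lemma gfun_nonneg_left (α t : ℝ) (hα : 0 < α) (hα4 : α ≤ 1/4) (ht : 0 < t) (ht1 : t ≤ 1) :
    0 ≤ gfun α t := by
  have key : AntitoneOn (gfun α) (Set.Icc t 1) := by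
    apply antitoneOn_of_deriv_nonpos (convex_Icc t 1)
    · intro x hx
      exact (gfun_hasDeriv α x (lt_of_lt_of_le ht hx.1)).continuousAt.continuousWithinAt
    · intro x hx
      rw [interior_Icc] at hx
      exact (gfun_hasDeriv α x (lt_trans ht hx.1)).differentiableAt.differentiableWithinAt
    · intro x hx
      rw [interior_Icc] at hx
      have hx0 : 0 < x := lt_trans ht hx.1
      rw [(gfun_hasDeriv α x hx0).deriv, gfun_deriv_eq α x hx0]
      apply div_nonpos_of_nonpos_of_nonneg
      · have h1 : x - 1 ≤ 0 := by linarith [hx.2]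
        have h2 : 0 ≤ 1/2 - α * (1 + x) := by nlinarith [hx.2, hx.1]
        nlinarith
      · positivity
  have := key (Set.mem_Icc.2 ⟨le_refl t, ht1⟩) (Set.mem_Icc.2 ⟨ht1, le_refl 1⟩) ht1
  rw [gfun_one] at this
  linarith

lemma gfun_nonneg_right (α t : ℝ) (hα : 0 < α) (ht1 : 1 ≤ t) (hcase : 2 * α * (1 + t) ≤ 1) :
    0 ≤ gfun α t := by
  have key : MonotoneOn (gfun α) (Set.Icc 1 t) := by
    apply monotoneOn_of_deriv_nonneg (convex_Icc 1 t)
    · intro x hx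
      exact (gfun_hasDeriv α x (lt_of_lt_of_le one_pos hx.1)).continuousAt.continuousWithinAt
    · intro x hx
      rw [interior_Icc] at hx
      exact (gfun_hasDeriv α x (lt_trans one_pos hx.1)).differentiableAt.differentiableWithinAt
    · intro x hx
      rw [interior_Icc] at hx
      have hx0 : 0 < x := lt_trans one_pos hx.1
      rw [(gfun_hasDeriv α x hx0).deriv, gfun_deriv_eq α x hx0]
      apply div_nonneg
      · have h1 : 0 ≤ x - 1 := by linarith [hx.1]
        have h2 : 0 ≤ 1/2 - α * (1 + x) := by nlinarith [hx.2]
        nlinarith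
      · positivity
  have := key (Set.mem_Icc.2 ⟨le_refl 1, ht1⟩) (Set.mem_Icc.2 ⟨ht1, le_refl t⟩) ht1
  rw [gfun_one] at this
  linarith

lemma scalar_lemma (α t : ℝ) (hα : 0 < α) (hα2 : 100 * (α * Real.log 2) ≤ 1)
    (ht : 0 < t) (hlog : 100 * (α * Real.log t) ≤ 1) :
    α * Real.log t + (1/2 - α) * (1 - 1/t) ≤ Real.log (2*t/(1+t)) := by
  have h1t : (0:ℝ) < 1 + t := by linarith
  have hlog2 : (0.6931471803 : ℝ) < Real.log 2 := Real.log_two_gt_d9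
  have hα4 : α ≤ 1/4 := by nlinarith
  have hsplit : Real.log (2*t/(1+t)) = Real.log 2 + Real.log t - Real.log (1+t) := by
    rw [Real.log_div (by positivity) (by positivity), Real.log_mul (by norm_num) ht.ne']
  rw [hsplit]
  rcases le_or_gt t 1 with hc1 | hc1
  · have := gfun_nonneg_left α t hα hα4 ht hc1
    simp only [gfun] at this
    linarith
  · rcases le_or_gt (2 * α * (1 + t)) 1 with hc2 | hc2
    · have := gfun_nonneg_right α t hα hc1.le hc2
      simp only [gfun] at this
      linarith
    · -- numeric regime : t is large
      have ht33 : (33:ℝ) ≤ t := by nlinarith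
      have hinv : 1/t ≤ 1/33 := by
        rw [div_le_div_iff₀ ht (by norm_num)]
        linarith
      have hinvpos : (0:ℝ) < 1/t := by positivity
      have hlt : Real.log (1+t) - Real.log t ≤ 1/t := by
        have h1 : Real.log ((1+t)/t) ≤ (1+t)/t - 1 :=
          Real.log_le_sub_one_of_pos (by positivity)
        rw [Real.log_div h1t.ne' ht.ne'] at h1
        have : (1+t)/t - 1 = 1/t := by field_simp; ring
        linarith
      have halog : α * Real.log t ≤ 1/100 := by linarith
      have hhalf : (1/2 - α) * (1 - 1/t) ≤ 1/2 * (1 - 1/t) := by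
        have : 0 ≤ 1 - 1/t := by
          have : 1/t ≤ 1 := by
            rw [div_le_one ht]; linarith
          linarith
        nlinarith
      linarith


open Finset

/-- tangent-line bound used twice: `log (v/u) ≤ v*U/(u*V) + log (V/U) - 1`. -/
lemma log_sum_ineq {ι : Type*} (s : Finset ι) (u v : ι → ℝ)
    (hu : ∀ i ∈ s, 0 ≤ u i) (hv : ∀ i ∈ s, 0 ≤ v i)
    (hz : ∀ i ∈ s, v i = 0 → u i = 0) :
    (∑ i ∈ s, u i) * (Real.log (∑ i ∈ s, u i) - Real.log (∑ i ∈ s, v i))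
      ≤ ∑ i ∈ s, u i * (Real.log (u i) - Real.log (v i)) := by
  set U := ∑ i ∈ s, u i with hU
  set V := ∑ i ∈ s, v i with hV
  rcases eq_or_lt_of_le (Finset.sum_nonneg hu) with hU0 | hUpos
  · -- U = 0 : all u i = 0, both sides 0
    have hall : ∀ i ∈ s, u i = 0 := by
      intro i hi
      exact le_antisymm (by
        have := Finset.single_le_sum hu hi
        rw [← hU] at this; linarith) (hu i hi)
    have hz1 : U = 0 := hU0.symm
    have hz2 : ∑ i ∈ s, u i * (Real.log (u i) - Real.log (v i)) = 0 :=
      Finset.sum_eq_zero (fun i hi => by rw [hall i hi]; ring)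
    rw [hz1, hz2]
    simp
  · have hVpos : 0 < V := by
      rcases eq_or_lt_of_le (Finset.sum_nonneg hv) with hV0 | h
      · exfalso
        have : ∀ i ∈ s, v i = 0 := by
          intro i hi
          exact le_antisymm (by
            have := Finset.single_le_sum hv hi
            rw [← hV] at this; linarith) (hv i hi)
        have : U = 0 := Finset.sum_eq_zero (fun i hi => hz i hi (this i hi))
        linarith
      · exact h
    -- pointwise : u i * (log (v i) - log (u i)) ≤ v i * U / V + u i * (log V - log U) - u i
    have key : ∀ i ∈ s, u i * (Real.log (v i) - Real.log (u i))
        ≤ v i * U / V + u i * (Real.log V - Real.log U) - u i := by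
      intro i hi
      rcases eq_or_lt_of_le (hu i hi) with h0 | hpos
      · rw [← h0]
        have h1 : (0:ℝ) ≤ v i := hv i hi
        have : (0:ℝ) ≤ v i * U / V := by positivity
        simp
        linarith
      · have hvpos : 0 < v i := by
          rcases eq_or_lt_of_le (hv i hi) with h0' | h' 
          · exfalso; have := hz i hi h0'.symm; linarith
          · exact h'
        have harg : 0 < v i * U / (u i * V) := by positivity
        have hlog := Real.log_le_sub_one_of_pos harg
        have hexp : Real.log (v i * U / (u i * V))
            = Real.log (v i) - Real.log (u i) + (Real.log U - Real.log V) := by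
          rw [Real.log_div (by positivity) (by positivity),
            Real.log_mul hvpos.ne' hUpos.ne', Real.log_mul hpos.ne' hVpos.ne']
          ring
        rw [hexp] at hlog
        have h2 : Real.log (v i) - Real.log (u i)
            ≤ v i * U / (u i * V) - 1 - (Real.log U - Real.log V) := by linarith
        have h3 := mul_le_mul_of_nonneg_left h2 hpos.le
        calc u i * (Real.log (v i) - Real.log (u i))
            ≤ u i * (v i * U / (u i * V) - 1 - (Real.log U - Real.log V)) := h3
          _ = v i * U / V + u i * (Real.log V - Real.log U) - u i := by
              field_simp
              ring
    have hsum := Finset.sum_le_sum key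
    rw [Finset.sum_sub_distrib, Finset.sum_add_distrib, ← Finset.sum_mul,
      ← Finset.sum_div, ← Finset.sum_mul] at hsum
    rw [← hV, ← hU] at hsum
    have hdiv : V * U / V = U := by field_simp
    rw [hdiv] at hsum
    have : ∑ i ∈ s, u i * (Real.log (v i) - Real.log (u i))
        = - ∑ i ∈ s, u i * (Real.log (u i) - Real.log (v i)) := by
      rw [← Finset.sum_neg_distrib]
      exact Finset.sum_congr rfl (fun i _ => by ring)
    rw [this] at hsum
    nlinarith [hsum]

/-- average of logs is at most log of average (tangent-line proof). -/
lemma avg_log_le {ι : Type*} (s : Finset ι) (hs : s.Nonempty) (x : ι → ℝ)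
    (hx : ∀ i ∈ s, 0 < x i) :
    (∑ i ∈ s, Real.log (x i)) ≤ s.card * Real.log ((∑ i ∈ s, x i) / s.card) := by
  have hcard : (0:ℝ) < s.card := by
    exact_mod_cast Finset.card_pos.2 hs
  set M := (∑ i ∈ s, x i) / s.card with hM
  have hMpos : 0 < M := by
    apply div_pos _ hcard
    exact Finset.sum_pos hx hs
  have key : ∀ i ∈ s, Real.log (x i) ≤ x i / M - 1 + Real.log M := by
    intro i hi
    have h1 := Real.log_le_sub_one_of_pos (div_pos (hx i hi) hMpos)
    rw [Real.log_div (hx i hi).ne' hMpos.ne'] at h1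
    linarith
  have hsum := Finset.sum_le_sum key
  rw [Finset.sum_add_distrib, Finset.sum_sub_distrib, ← Finset.sum_div] at hsum
  have hSpos : 0 < ∑ i ∈ s, x i := Finset.sum_pos hx hs
  have h2 : (∑ i ∈ s, x i) / M = s.card := by
    rw [hM]
    field_simp
  rw [h2] at hsum
  simp only [Finset.sum_const, nsmul_eq_mul] at hsum
  linarith

lemma data_processing {ι Y : Type*} [Fintype ι] [DecidableEq ι] [DecidableEq Y]
    (u v : ι → ℝ) (T : ι → Y)
    (hu : ∀ i, 0 ≤ u i) (hv : ∀ i, 0 ≤ v i) (hz : ∀ i, v i = 0 → u i = 0) :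
    ∑ g, u g * (Real.log (∑ h ∈ univ.filter (fun h => T h = T g), u h)
              - Real.log (∑ h ∈ univ.filter (fun h => T h = T g), v h))
      ≤ ∑ g, u g * (Real.log (u g) - Real.log (v g)) := by
  have hmaps : ∀ x ∈ (univ : Finset ι), T x ∈ univ.image T :=
    fun x hx => Finset.mem_image_of_mem T hx
  rw [← Finset.sum_fiberwise_of_maps_to hmaps
    (fun g => u g * (Real.log (∑ h ∈ univ.filter (fun h => T h = T g), u h)
              - Real.log (∑ h ∈ univ.filter (fun h => T h = T g), v h))),
    ← Finset.sum_fiberwise_of_maps_to hmaps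
    (fun g => u g * (Real.log (u g) - Real.log (v g)))]
  apply Finset.sum_le_sum
  intro y hy
  have hfib : ∀ g ∈ univ.filter (fun x => T x = y),
      univ.filter (fun h => T h = T g) = univ.filter (fun h => T h = y) := by
    intro g hg
    rw [Finset.mem_filter] at hg
    rw [hg.2]
  calc ∑ g ∈ univ.filter (fun x => T x = y),
        u g * (Real.log (∑ h ∈ univ.filter (fun h => T h = T g), u h)
             - Real.log (∑ h ∈ univ.filter (fun h => T h = T g), v h))
      = ∑ g ∈ univ.filter (fun x => T x = y),
        u g * (Real.log (∑ h ∈ univ.filter (fun h => T h = y), u h)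
             - Real.log (∑ h ∈ univ.filter (fun h => T h = y), v h)) := by
        apply Finset.sum_congr rfl
        intro g hg
        rw [hfib g hg]
    _ = (∑ g ∈ univ.filter (fun x => T x = y), u g)
          * (Real.log (∑ h ∈ univ.filter (fun h => T h = y), u h)
           - Real.log (∑ h ∈ univ.filter (fun h => T h = y), v h)) := by
        rw [Finset.sum_mul]
    _ ≤ ∑ g ∈ univ.filter (fun x => T x = y), u g * (Real.log (u g) - Real.log (v g)) := by
        apply log_sum_ineq
        · exact fun i _ => hu i
        · exact fun i _ => hv i
        · exact fun i _ => hz i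


open Finset

/-- the tail statistic: the inverse on positions `≥ k`. -/
def tmap {n : ℕ} (k : ℕ) (g : Equiv.Perm (Fin n)) : Fin n → Option (Fin n) :=
  fun m => if k ≤ (m : ℕ) then some (g.symm m) else none

lemma tmap_eq_iff {n : ℕ} (k : ℕ) (τ σ : Equiv.Perm (Fin n)) :
    tmap k τ = tmap k σ ↔ ∀ m : Fin n, k ≤ (m : ℕ) → τ.symm m = σ.symm m := by
  constructor
  · intro h m hm
    have := congrFun h m
    simp only [tmap, if_pos hm, Option.some_inj] at this
    exact this
  · intro h
    funext m
    by_cases hm : k ≤ (m : ℕ)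
    · simp only [tmap, if_pos hm, Option.some_inj]
      exact h m hm
    · simp only [tmap, if_neg hm]

lemma tailProb_eq_fiber {n : ℕ} (p : Equiv.Perm (Fin n) → ℝ) (k : ℕ)
    (σ : Equiv.Perm (Fin n)) :
    tailProb p k σ = ∑ τ ∈ Finset.univ.filter (fun τ => tmap k τ = tmap k σ), p τ := by
  unfold tailProb
  congr 1
  apply Finset.filter_congr
  intro τ _
  exact (tmap_eq_iff k τ σ).symm

/-- the "collision partner" mass `r_i(σ)`. -/
noncomputable def rfun {n : ℕ} (p : Equiv.Perm (Fin n) → ℝ) (i j : Fin n)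
    (σ : Equiv.Perm (Fin n)) : ℝ :=
  ∑ τ ∈ Finset.univ.filter (fun τ : Equiv.Perm (Fin n) =>
      (∀ m : Fin n, (j : ℕ) + 1 ≤ (m : ℕ) → τ.symm m = σ.symm m) ∧ τ.symm i = σ.symm j), p τ

lemma swap_mul_symm_apply {n : ℕ} (i j : Fin n) (τ : Equiv.Perm (Fin n)) (m : Fin n) :
    (Equiv.swap i j * τ).symm m = τ.symm (Equiv.swap i j m) := by
  simp [Equiv.Perm.mul_def, Equiv.symm_trans_apply]

lemma collide_tail {n : ℕ} (p : Equiv.Perm (Fin n) → ℝ) (i j : Fin n) (hij : i ≤ j)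
    (σ : Equiv.Perm (Fin n)) :
    tailProb (collideLaw p i j) ((j : ℕ)) σ = (tailProb p ((j : ℕ)) σ + rfun p i j σ) / 2 := by
  have hvij : (i : ℕ) ≤ (j : ℕ) := hij
  set s := Equiv.swap i j with hs
  have hsm : ∀ m : Fin n, (j : ℕ) + 1 ≤ (m : ℕ) → s m = m := by
    intro m hm
    apply Equiv.swap_apply_of_ne_of_ne
    · intro h; subst h; omega
    · intro h; subst h; omega
  have hsi : s i = j := Equiv.swap_apply_left i j
  have hss : ∀ τ : Equiv.Perm (Fin n), s * (s * τ) = τ := by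
    intro τ; rw [← mul_assoc, Equiv.swap_mul_self, one_mul]
  have mem_iff : ∀ τ : Equiv.Perm (Fin n),
      (∀ m : Fin n, (j : ℕ) ≤ (m : ℕ) → τ.symm m = σ.symm m) ↔
      ((∀ m : Fin n, (j : ℕ) + 1 ≤ (m : ℕ) → (s * τ).symm m = σ.symm m)
        ∧ (s * τ).symm i = σ.symm j) := by
    intro τ
    constructor
    · intro h
      constructor
      · intro m hm
        rw [swap_mul_symm_apply, hs] at *
        rw [hsm m hm]
        exact h m (by omega)
      · rw [swap_mul_symm_apply, hsi]
        exact h j le_rfl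
    · rintro ⟨h1, h2⟩ m hm
      rcases eq_or_lt_of_le hm with heq | hlt
      · have hmj : m = j := Fin.ext heq.symm
        subst hmj
        rw [swap_mul_symm_apply, hsi] at h2
        exact h2
      · have hm1 : (j : ℕ) + 1 ≤ (m : ℕ) := hlt
        have := h1 m hm1
        rw [swap_mul_symm_apply, hsm m hm1] at this
        exact this
  unfold tailProb collideLaw rfun
  have key : ∑ τ ∈ Finset.univ.filter (fun τ : Equiv.Perm (Fin n) =>
        ∀ m : Fin n, (j : ℕ) ≤ (m : ℕ) → τ.symm m = σ.symm m), p (s * τ)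
      = ∑ τ ∈ Finset.univ.filter (fun τ : Equiv.Perm (Fin n) =>
        (∀ m : Fin n, (j : ℕ) + 1 ≤ (m : ℕ) → τ.symm m = σ.symm m)
          ∧ τ.symm i = σ.symm j), p τ := by
    apply Finset.sum_nbij' (i := fun τ => s * τ) (j := fun τ => s * τ)
    · intro τ hτ
      rw [Finset.mem_filter] at hτ ⊢
      exact ⟨Finset.mem_univ _, (mem_iff τ).1 hτ.2⟩
    · intro τ hτ
      rw [Finset.mem_filter] at hτ ⊢
      refine ⟨Finset.mem_univ _, (mem_iff (s * τ)).2 ?_⟩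
      rw [hss τ]
      exact hτ.2
    · intro τ _; exact hss τ
    · intro τ _; exact hss τ
    · intro τ _; rfl
  rw [← key, ← Finset.sum_add_distrib, ← Finset.sum_div]

lemma sum_rfun {n : ℕ} (p : Equiv.Perm (Fin n) → ℝ) (j : Fin n) (σ : Equiv.Perm (Fin n)) :
    ∑ i ∈ Finset.Iic j, rfun p i j σ = tailProb p ((j : ℕ) + 1) σ := by
  have h1 : ∀ i : Fin n, rfun p i j σ = ∑ τ : Equiv.Perm (Fin n),
      if ((∀ m : Fin n, (j : ℕ) + 1 ≤ (m : ℕ) → τ.symm m = σ.symm m)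
          ∧ τ.symm i = σ.symm j) then p τ else 0 := by
    intro i
    unfold rfun
    rw [Finset.sum_filter]
  have h2 : tailProb p ((j : ℕ) + 1) σ = ∑ τ : Equiv.Perm (Fin n),
      if (∀ m : Fin n, (j : ℕ) + 1 ≤ (m : ℕ) → τ.symm m = σ.symm m) then p τ else 0 := by
    unfold tailProb
    rw [Finset.sum_filter]
  rw [h2]
  simp only [h1]
  rw [Finset.sum_comm]
  apply Finset.sum_congr rfl
  intro τ _
  by_cases hC : ∀ m : Fin n, (j : ℕ) + 1 ≤ (m : ℕ) → τ.symm m = σ.symm m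
  · rw [if_pos hC]
    have hstep : ∀ x : Fin n, (if (∀ (m : Fin n), (j:ℕ) + 1 ≤ (m:ℕ) → (Equiv.symm τ) m = (Equiv.symm σ) m) ∧ (Equiv.symm τ) x = (Equiv.symm σ) j then p τ else 0) = (if x = τ (σ.symm j) then p τ else 0) := by
      intro x
      have : ((∀ (m : Fin n), (j:ℕ) + 1 ≤ (m:ℕ) → (Equiv.symm τ) m = (Equiv.symm σ) m) ∧ (Equiv.symm τ) x = (Equiv.symm σ) j) ↔ (x = τ (σ.symm j)) := by
        rw [Equiv.symm_apply_eq]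
        exact ⟨fun h => h.2, fun h => ⟨hC, h⟩⟩
      simp only [this]
    rw [Finset.sum_congr rfl (fun x _ => hstep x)]
    rw [Finset.sum_ite_eq' (Finset.Iic j) (τ (σ.symm j)) (fun _ => p τ)]
    have hmem : τ (σ.symm j) ∈ Finset.Iic j := by
      rw [Finset.mem_Iic]
      by_contra hlt
      have hj1 : (j : ℕ) + 1 ≤ ((τ (σ.symm j)) : ℕ) := by
        rw [not_le, Fin.lt_def] at hlt
        omega
      have h5 := hC (τ (σ.symm j)) hj1
      rw [Equiv.symm_apply_apply] at h5
      have h6 : j = τ (σ.symm j) := σ.symm.injective h5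
      exact hlt (le_of_eq h6.symm)
    rw [if_pos hmem]
  · rw [if_neg hC]
    apply Finset.sum_eq_zero
    intro x _
    rw [if_neg]
    tauto

lemma rfun_fiber {n : ℕ} (p : Equiv.Perm (Fin n) → ℝ) (i j : Fin n)
    (g : Equiv.Perm (Fin n)) :
    rfun p i j g = ∑ τ ∈ Finset.univ.filter (fun τ : Equiv.Perm (Fin n) =>
      (∀ m : Fin n, (j : ℕ) + 1 ≤ (m : ℕ) → some (τ.symm m) = tmap (j : ℕ) g m)
        ∧ some (τ.symm i) = tmap (j : ℕ) g j), p τ := by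
  unfold rfun
  congr 1
  apply Finset.filter_congr
  intro τ _
  constructor
  · rintro ⟨h1, h2⟩
    constructor
    · intro m hm
      rw [tmap, if_pos (by omega), Option.some_inj]
      exact h1 m hm
    · rw [tmap, if_pos (le_refl _), Option.some_inj]
      exact h2
  · rintro ⟨h1, h2⟩
    constructor
    · intro m hm
      have := h1 m hm
      rw [tmap, if_pos (by omega), Option.some_inj] at this
      exact this
    · rw [tmap, if_pos (le_refl _), Option.some_inj] at h2
      exact h2

lemma sum_p_rdiv {n : ℕ} (p : Equiv.Perm (Fin n) → ℝ) (hp : IsDist p) (i j : Fin n) :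
    ∑ g : Equiv.Perm (Fin n), p g * (rfun p i j g / tailProb p ((j : ℕ)) g) ≤ 1 := by
  obtain ⟨hp0, hp1⟩ := hp
  set E : (Fin n → Option (Fin n)) → Finset (Equiv.Perm (Fin n)) := fun y =>
    Finset.univ.filter (fun τ : Equiv.Perm (Fin n) =>
      (∀ m : Fin n, (j : ℕ) + 1 ≤ (m : ℕ) → some (τ.symm m) = y m)
        ∧ some (τ.symm i) = y j) with hE
  set A : (Fin n → Option (Fin n)) → ℝ := fun y =>
    ∑ h ∈ Finset.univ.filter (fun h => tmap (j : ℕ) h = y), p h with hA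
  set R : (Fin n → Option (Fin n)) → ℝ := fun y => ∑ τ ∈ E y, p τ with hR
  have hstep : ∀ g : Equiv.Perm (Fin n),
      p g * (rfun p i j g / tailProb p ((j : ℕ)) g)
        = p g * (R (tmap (j : ℕ) g) / A (tmap (j : ℕ) g)) := by
    intro g
    rw [rfun_fiber, tailProb_eq_fiber]
  simp only [hstep]
  have hmaps : ∀ x ∈ (Finset.univ : Finset (Equiv.Perm (Fin n))),
      tmap (j : ℕ) x ∈ Finset.univ.image (tmap (j : ℕ)) :=
    fun x hx => Finset.mem_image_of_mem _ hx
  rw [← Finset.sum_fiberwise_of_maps_to hmaps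
    (fun g => p g * (R (tmap (j : ℕ) g) / A (tmap (j : ℕ) g)))]
  have inner : ∀ y ∈ Finset.univ.image (tmap (j : ℕ)),
      ∑ g ∈ Finset.univ.filter (fun x => tmap (j : ℕ) x = y),
        p g * (R (tmap (j : ℕ) g) / A (tmap (j : ℕ) g)) ≤ R y := by
    intro y _
    have : ∀ g ∈ Finset.univ.filter (fun x => tmap (j : ℕ) x = y),
        p g * (R (tmap (j : ℕ) g) / A (tmap (j : ℕ) g)) = p g * (R y / A y) := by
      intro g hg
      rw [Finset.mem_filter] at hg
      rw [hg.2]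
    rw [Finset.sum_congr rfl this, ← Finset.sum_mul]
    have hAy : A y = ∑ g ∈ Finset.univ.filter (fun x => tmap (j : ℕ) x = y), p g := rfl
    rw [← hAy]
    rcases eq_or_ne (A y) 0 with h0 | h0
    · rw [h0, div_zero, mul_zero]
      exact Finset.sum_nonneg (fun τ _ => hp0 τ)
    · rw [mul_div_cancel₀ _ h0]
  calc ∑ y ∈ Finset.univ.image (tmap (j : ℕ)),
        ∑ g ∈ Finset.univ.filter (fun x => tmap (j : ℕ) x = y),
          p g * (R (tmap (j : ℕ) g) / A (tmap (j : ℕ) g))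
      ≤ ∑ y ∈ Finset.univ.image (tmap (j : ℕ)), R y := Finset.sum_le_sum inner
    _ = ∑ τ ∈ (Finset.univ.image (tmap (j : ℕ))).biUnion E, p τ := by
        rw [Finset.sum_biUnion]
        intro y hy y' hy' hne
        simp only [Function.onFun]
        rw [Finset.disjoint_left]
        intro τ hτ hτ'
        apply hne
        rw [Finset.mem_coe, Finset.mem_image] at hy hy'
        obtain ⟨g, _, rfl⟩ := hy
        obtain ⟨g', _, rfl⟩ := hy'
        rw [hE, Finset.mem_filter] at hτ hτ'
        obtain ⟨-, h1, h2⟩ := hτ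
        obtain ⟨-, h1', h2'⟩ := hτ'
        funext m
        rcases Nat.lt_trichotomy (m : ℕ) (j : ℕ) with hlt | heq | hgt
        · rw [tmap, tmap, if_neg (by omega), if_neg (by omega)]
        · have hmj : m = j := Fin.ext heq
          subst hmj
          rw [← h2, ← h2']
        · have hm1 : (j : ℕ) + 1 ≤ (m : ℕ) := hgt
          rw [← h1 m hm1, ← h1' m hm1]
    _ ≤ ∑ τ : Equiv.Perm (Fin n), p τ := by
        apply Finset.sum_le_sum_of_subset_of_nonneg (Finset.subset_univ _)
        intro τ _ _
        exact hp0 τ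
    _ = 1 := hp1

lemma collideLaw_invariant {n : ℕ} (p : Equiv.Perm (Fin n) → ℝ) (i j : Fin n)
    (g : Equiv.Perm (Fin n)) :
    collideLaw p i j (Equiv.swap i j * g) = collideLaw p i j g := by
  unfold collideLaw
  rw [← mul_assoc, Equiv.swap_mul_self, one_mul]
  ring

lemma relEnt_collide {n : ℕ} (p : Equiv.Perm (Fin n) → ℝ) (i j : Fin n) :
    relEnt (collideLaw p i j) = ∑ g : Equiv.Perm (Fin n),
      p g * Real.log ((Fintype.card (Equiv.Perm (Fin n)) : ℝ) * collideLaw p i j g) := by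
  unfold relEnt
  set L : Equiv.Perm (Fin n) → ℝ := fun g =>
    Real.log ((Fintype.card (Equiv.Perm (Fin n)) : ℝ) * collideLaw p i j g) with hL
  have hLinv : ∀ g, L (Equiv.swap i j * g) = L g := by
    intro g
    rw [hL]
    simp only [collideLaw_invariant]
  have hswap : ∑ g : Equiv.Perm (Fin n), p (Equiv.swap i j * g) * L g
      = ∑ g : Equiv.Perm (Fin n), p g * L g := by
    apply Fintype.sum_equiv (Equiv.mulLeft (Equiv.swap i j))
    intro g
    simp only [Equiv.coe_mulLeft]
    rw [hLinv g]
  calc ∑ g : Equiv.Perm (Fin n), collideLaw p i j g * L g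
      = ∑ g : Equiv.Perm (Fin n),
        (p g * L g / 2 + p (Equiv.swap i j * g) * L g / 2) := by
        apply Finset.sum_congr rfl
        intro g _
        unfold collideLaw
        ring
    _ = ∑ g : Equiv.Perm (Fin n), p g * L g := by
        rw [Finset.sum_add_distrib, ← Finset.sum_div, ← Finset.sum_div, hswap]
        ring

lemma tailProb_mono {n : ℕ} (p : Equiv.Perm (Fin n) → ℝ) (hp0 : ∀ g, 0 ≤ p g) (j : Fin n)
    (g : Equiv.Perm (Fin n)) :
    tailProb p ((j : ℕ)) g ≤ tailProb p ((j : ℕ) + 1) g := by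
  unfold tailProb
  apply Finset.sum_le_sum_of_subset_of_nonneg
  · intro τ hτ
    rw [Finset.mem_filter] at hτ ⊢
    exact ⟨hτ.1, fun m hm => hτ.2 m (by omega)⟩
  · exact fun τ _ _ => hp0 τ

lemma self_le_tailProb {n : ℕ} (p : Equiv.Perm (Fin n) → ℝ) (hp0 : ∀ g, 0 ≤ p g) (k : ℕ)
    (g : Equiv.Perm (Fin n)) : p g ≤ tailProb p k g := by
  unfold tailProb
  apply Finset.single_le_sum (fun τ _ => hp0 τ)
  rw [Finset.mem_filter]
  exact ⟨Finset.mem_univ _, fun m _ => rfl⟩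

lemma tailProb_nonneg {n : ℕ} (p : Equiv.Perm (Fin n) → ℝ) (hp0 : ∀ g, 0 ≤ p g) (k : ℕ)
    (g : Equiv.Perm (Fin n)) : 0 ≤ tailProb p k g :=
  Finset.sum_nonneg (fun τ _ => hp0 τ)

lemma tailProb_le_one {n : ℕ} (p : Equiv.Perm (Fin n) → ℝ) (hp : IsDist p) (k : ℕ)
    (g : Equiv.Perm (Fin n)) : tailProb p k g ≤ 1 := by
  obtain ⟨hp0, hp1⟩ := hp
  unfold tailProb
  rw [← hp1]
  apply Finset.sum_le_sum_of_subset_of_nonneg (Finset.subset_univ _)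
  exact fun τ _ _ => hp0 τ

lemma rfun_nonneg {n : ℕ} (p : Equiv.Perm (Fin n) → ℝ) (hp0 : ∀ g, 0 ≤ p g) (i j : Fin n)
    (g : Equiv.Perm (Fin n)) : 0 ≤ rfun p i j g :=
  Finset.sum_nonneg (fun τ _ => hp0 τ)

lemma inv_t_eq (C A B x : ℝ) : x * (1/(C*(A/B))) = (1/C) * (x * (B/A)) := by
  rcases eq_or_ne A 0 with h | h
  · simp [h]
  rcases eq_or_ne B 0 with h' | h'
  · simp [h']
  rcases eq_or_ne C 0 with h'' | h''
  · simp [h'']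
  field_simp

set_option maxHeartbeats 2000000 in
/-- Warm-up lemma (Lemma 6 of the paper): there is a universal constant `c > 0` such that
for any `n ≥ 2`, any random permutation `μ` with law `p`, and any position `j`,
`(1/j) Σ_{i ≤ j} ENT(μ c(i,j)) ≤ ENT(μ) − c E[ENT(μ, j)] / log n`. -/
theorem warmup_lemma :
    ∃ c : ℝ, 0 < c ∧
      ∀ (n : ℕ), 2 ≤ n → ∀ p : Equiv.Perm (Fin n) → ℝ, IsDist p → ∀ j : Fin n,
        (1 / ((j : ℕ) + 1 : ℝ)) * ∑ i ∈ Finset.Iic j, relEnt (collideLaw p i j)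
          ≤ relEnt p - c * expCondEnt p (j : ℕ) / Real.log n := by
  refine ⟨1/100, by norm_num, ?_⟩
  intro n hn p hp j
  obtain ⟨hp0, hp1⟩ := hp
  have hn1 : (1:ℝ) < (n:ℝ) := by exact_mod_cast lt_of_lt_of_le one_lt_two hn
  have hlogn : 0 < Real.log n := Real.log_pos hn1
  set α : ℝ := (1/100) / Real.log n with hα
  have hαpos : 0 < α := by positivity
  set c1 : ℝ := ((j : ℕ) : ℝ) + 1 with hc1
  have hc1pos : (0:ℝ) < c1 := by positivity
  set a : Equiv.Perm (Fin n) → ℝ := fun g => tailProb p ((j : ℕ)) g with ha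
  set b : Equiv.Perm (Fin n) → ℝ := fun g => tailProb p ((j : ℕ) + 1) g with hb
  set t : Equiv.Perm (Fin n) → ℝ := fun g => c1 * (a g / b g) with hT
  -- step 1 : data processing per collision
  have step1 : ∀ i ∈ Finset.Iic j,
      ∑ g : Equiv.Perm (Fin n),
        p g * (Real.log (a g) - Real.log ((a g + rfun p i j g)/2))
        ≤ relEnt p - relEnt (collideLaw p i j) := by
    intro i hi
    have hij : i ≤ j := Finset.mem_Iic.1 hi
    have hνdef : ∀ g, collideLaw p i j g = (p g + p (Equiv.swap i j * g))/2 := fun g => rfl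
    have hν0 : ∀ g, 0 ≤ collideLaw p i j g := by
      intro g
      rw [hνdef]
      have := hp0 g; have := hp0 (Equiv.swap i j * g)
      positivity
    have hνz : ∀ g, collideLaw p i j g = 0 → p g = 0 := by
      intro g h0
      rw [hνdef] at h0
      have h1 := hp0 g; have h2 := hp0 (Equiv.swap i j * g)
      linarith [h0]
    have hνge : ∀ g, p g / 2 ≤ collideLaw p i j g := by
      intro g
      rw [hνdef]
      have := hp0 (Equiv.swap i j * g)
      linarith
    have hid : relEnt p - relEnt (collideLaw p i j)
        = ∑ g : Equiv.Perm (Fin n),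
            p g * (Real.log (p g) - Real.log (collideLaw p i j g)) := by
      rw [relEnt_collide]
      unfold relEnt
      rw [← Finset.sum_sub_distrib]
      apply Finset.sum_congr rfl
      intro g _
      rcases eq_or_lt_of_le (hp0 g) with h0 | hpos
      · rw [← h0]; ring
      · have hcard0 : (0:ℝ) < (Fintype.card (Equiv.Perm (Fin n)) : ℝ) := by
          exact_mod_cast Fintype.card_pos
        have hνpos : 0 < collideLaw p i j g := lt_of_lt_of_le (by linarith) (hνge g)
        rw [Real.log_mul hcard0.ne' hpos.ne', Real.log_mul hcard0.ne' hνpos.ne']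
        ring
    rw [hid]
    have hdp := data_processing p (collideLaw p i j) (tmap (n := n) ((j : ℕ))) hp0 hν0 hνz
    refine le_trans (le_of_eq ?_) hdp
    apply Finset.sum_congr rfl
    intro g _
    congr 2
    · rw [← tailProb_eq_fiber]
    · rw [← tailProb_eq_fiber, collide_tail p i j hij g]
  -- step 2 : per-g Jensen + scalar bound
  have hscalar2 : 100 * (α * Real.log 2) ≤ 1 := by
    rw [hα]
    have h2n : Real.log 2 ≤ Real.log n := by
      apply Real.log_le_log (by norm_num)
      exact_mod_cast hn
    have heq : (100:ℝ) * (1 / 100 / Real.log n * Real.log 2) = Real.log 2 / Real.log n := by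
      field_simp
    rw [heq, div_le_one hlogn]
    exact h2n
  have step2 : ∀ g : Equiv.Perm (Fin n), p g ≠ 0 →
      c1 * (α * Real.log (t g) + (1/2 - α) * (1 - 1/(t g)))
        ≤ ∑ i ∈ Finset.Iic j, (Real.log (a g) - Real.log ((a g + rfun p i j g)/2)) := by
    intro g hpg
    have hpgpos : 0 < p g := lt_of_le_of_ne (hp0 g) (Ne.symm hpg)
    have hag : 0 < a g := lt_of_lt_of_le hpgpos (self_le_tailProb p hp0 _ g)
    have hbg : 0 < b g := lt_of_lt_of_le hag (tailProb_mono p hp0 j g)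
    have htg : 0 < t g := by
      rw [hT]
      positivity
    have htgn : t g ≤ (n : ℝ) := by
      rw [hT]
      have h1 : a g / b g ≤ 1 := div_le_one_of_le₀ (tailProb_mono p hp0 j g) hbg.le
      have h2 : c1 ≤ (n:ℝ) := by
        rw [hc1]
        have := j.isLt
        exact_mod_cast this
      calc c1 * (a g / b g) ≤ c1 * 1 := by
            apply mul_le_mul_of_nonneg_left h1 hc1pos.le
        _ = c1 := mul_one c1
        _ ≤ (n:ℝ) := h2
    have hscalar1 : 100 * (α * Real.log (t g)) ≤ 1 := by
      have hlt : Real.log (t g) ≤ Real.log n := Real.log_le_log htg htgn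
      rw [hα]
      have heq : (100:ℝ) * (1 / 100 / Real.log n * Real.log (t g))
          = Real.log (t g) / Real.log n := by field_simp
      rw [heq, div_le_one hlogn]
      exact hlt
    have hsc := scalar_lemma α (t g) hαpos hscalar2 htg hscalar1
    -- Jensen step
    have hne : (Finset.Iic j).Nonempty := ⟨j, Finset.mem_Iic.2 le_rfl⟩
    have hxpos : ∀ i ∈ Finset.Iic j, 0 < (a g + rfun p i j g)/2 := by
      intro i _
      have := rfun_nonneg p hp0 i j g
      positivity
    have hJ := avg_log_le (Finset.Iic j) hne (fun i => (a g + rfun p i j g)/2) hxpos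
    have hcard : ((Finset.Iic j).card : ℝ) = c1 := by
      rw [Fin.card_Iic, hc1]
      push_cast
      ring
    have hsumx : ∑ i ∈ Finset.Iic j, (a g + rfun p i j g)/2 = (c1 * a g + b g)/2 := by
      rw [← Finset.sum_div, Finset.sum_add_distrib, Finset.sum_const, sum_rfun, Fin.card_Iic,
        nsmul_eq_mul]
      have h1 : ((((j : ℕ) + 1 : ℕ)) : ℝ) = c1 := by rw [hc1]; push_cast; ring
      rw [h1]
    rw [hsumx, hcard] at hJ
    have hMpos : 0 < ((c1 * a g + b g)/2)/c1 := by positivity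
    have hlogM : Real.log (a g) - Real.log (((c1 * a g + b g)/2)/c1)
        = Real.log (2 * t g / (1 + t g)) := by
      rw [← Real.log_div hag.ne' hMpos.ne']
      congr 1
      rw [hT]
      field_simp
      ring
    have hfinal : ∑ i ∈ Finset.Iic j, (Real.log (a g) - Real.log ((a g + rfun p i j g)/2))
        = c1 * Real.log (a g) - ∑ i ∈ Finset.Iic j, Real.log ((a g + rfun p i j g)/2) := by
      rw [Finset.sum_sub_distrib, Finset.sum_const, Fin.card_Iic, nsmul_eq_mul]
      congr 2
      rw [hc1]; push_cast; ring
    rw [hfinal]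
    have : ∑ i ∈ Finset.Iic j, Real.log ((a g + rfun p i j g)/2)
        ≤ c1 * Real.log (((c1 * a g + b g)/2)/c1) := hJ
    calc c1 * (α * Real.log (t g) + (1/2 - α) * (1 - 1/(t g)))
        ≤ c1 * Real.log (2 * t g / (1 + t g)) := by
          apply mul_le_mul_of_nonneg_left hsc hc1pos.le
      _ = c1 * (Real.log (a g) - Real.log (((c1 * a g + b g)/2)/c1)) := by rw [hlogM]
      _ ≤ c1 * Real.log (a g) - ∑ i ∈ Finset.Iic j, Real.log ((a g + rfun p i j g)/2) := by
          rw [mul_sub]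
          linarith [mul_le_mul_of_nonneg_left hJ hc1pos.le, this]
  -- step 3 : the constraint  Σ p (1/t) ≤ 1
  have step3 : ∑ g : Equiv.Perm (Fin n), p g * (1 / t g) ≤ 1 := by
    have heq : ∀ g : Equiv.Perm (Fin n),
        p g * (1 / t g) = ∑ i ∈ Finset.Iic j, (1/c1) * (p g * (rfun p i j g / a g)) := by
      intro g
      have h1 : ∑ i ∈ Finset.Iic j, (1/c1) * (p g * (rfun p i j g / a g))
          = (1/c1) * (p g * ((∑ i ∈ Finset.Iic j, rfun p i j g) / a g)) := by
        rw [← Finset.mul_sum, ← Finset.mul_sum, ← Finset.sum_div]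
      rw [h1, sum_rfun]
      exact inv_t_eq c1 (a g) (b g) (p g)
    rw [Finset.sum_congr rfl (fun g _ => heq g), Finset.sum_comm]
    have hper : ∀ i ∈ Finset.Iic j,
        ∑ g : Equiv.Perm (Fin n), (1/c1) * (p g * (rfun p i j g / a g)) ≤ (1/c1) * 1 := by
      intro i _
      rw [← Finset.mul_sum]
      apply mul_le_mul_of_nonneg_left _ (by positivity)
      exact sum_p_rdiv p ⟨hp0, hp1⟩ i j
    calc ∑ i ∈ Finset.Iic j, ∑ g : Equiv.Perm (Fin n), (1/c1) * (p g * (rfun p i j g / a g))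
        ≤ ∑ i ∈ Finset.Iic j, (1/c1) * 1 := Finset.sum_le_sum hper
      _ = 1 := by
          rw [Finset.sum_const, Fin.card_Iic, nsmul_eq_mul]
          rw [hc1]
          push_cast
          field_simp
  -- step 4 : identify expCondEnt
  have hexp : expCondEnt p ((j : ℕ)) = ∑ g : Equiv.Perm (Fin n), p g * Real.log (t g) := rfl
  -- assemble
  have main : c1 * (α * expCondEnt p ((j : ℕ)))
      ≤ ∑ i ∈ Finset.Iic j, (relEnt p - relEnt (collideLaw p i j)) := by
    have hA : ∑ i ∈ Finset.Iic j, ∑ g : Equiv.Perm (Fin n),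
        p g * (Real.log (a g) - Real.log ((a g + rfun p i j g)/2))
        ≤ ∑ i ∈ Finset.Iic j, (relEnt p - relEnt (collideLaw p i j)) :=
      Finset.sum_le_sum step1
    rw [Finset.sum_comm] at hA
    have hB : ∀ g : Equiv.Perm (Fin n),
        p g * (c1 * (α * Real.log (t g) + (1/2 - α) * (1 - 1/(t g))))
        ≤ ∑ i ∈ Finset.Iic j, p g * (Real.log (a g) - Real.log ((a g + rfun p i j g)/2)) := by
      intro g
      rw [← Finset.mul_sum]
      rcases eq_or_ne (p g) 0 with h0 | h0
      · rw [h0]; simp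
      · exact mul_le_mul_of_nonneg_left (step2 g h0) (hp0 g)
    have hC : ∑ g : Equiv.Perm (Fin n),
        p g * (c1 * (α * Real.log (t g) + (1/2 - α) * (1 - 1/(t g))))
        ≤ ∑ i ∈ Finset.Iic j, (relEnt p - relEnt (collideLaw p i j)) :=
      le_trans (Finset.sum_le_sum (fun g _ => hB g)) hA
    refine le_trans ?_ hC
    have expand : ∑ g : Equiv.Perm (Fin n),
        p g * (c1 * (α * Real.log (t g) + (1/2 - α) * (1 - 1/(t g))))
        = c1 * α * (∑ g : Equiv.Perm (Fin n), p g * Real.log (t g))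
          + c1 * (1/2 - α) * ((∑ g : Equiv.Perm (Fin n), p g)
            - ∑ g : Equiv.Perm (Fin n), p g * (1 / t g)) := by
      rw [← Finset.sum_sub_distrib, Finset.mul_sum, Finset.mul_sum, ← Finset.sum_add_distrib]
      apply Finset.sum_congr rfl
      intro g _
      ring
    rw [expand, hexp, hp1]
    have hhalf : 0 ≤ 1/2 - α := by
      have h2n : Real.log 2 ≤ Real.log n := by
        apply Real.log_le_log (by norm_num)
        exact_mod_cast hn
      have hα' : α ≤ 1 / 100 / Real.log 2 := by
        rw [hα]
        apply div_le_div_of_nonneg_left (by norm_num) (Real.log_pos one_lt_two) h2n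
      have hl2 := Real.log_two_gt_d9
      have : 1 / 100 / Real.log 2 ≤ 1/2 := by
        rw [div_le_iff₀ (by linarith : (0:ℝ) < Real.log 2)]
        nlinarith
      linarith
    have h0 : 0 ≤ c1 * (1/2 - α) * (1 - ∑ g : Equiv.Perm (Fin n), p g * (1 / t g)) :=
      mul_nonneg (mul_nonneg hc1pos.le hhalf) (by linarith [step3])
    have hring : c1 * (α * (∑ g : Equiv.Perm (Fin n), p g * Real.log (t g)))
        = c1 * α * (∑ g : Equiv.Perm (Fin n), p g * Real.log (t g)) := by ring
    linarith [h0, hring]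
  -- finish
  have hsplit : ∑ i ∈ Finset.Iic j, (relEnt p - relEnt (collideLaw p i j))
      = c1 * relEnt p - ∑ i ∈ Finset.Iic j, relEnt (collideLaw p i j) := by
    rw [Finset.sum_sub_distrib, Finset.sum_const, Fin.card_Iic, nsmul_eq_mul]
    congr 2
    rw [hc1]; push_cast; ring
  rw [hsplit] at main
  have hgoal2 : (1/100) * expCondEnt p ((j : ℕ)) / Real.log n = α * expCondEnt p ((j : ℕ)) := by
    rw [hα]; ring
  rw [hgoal2]
  have hfin : ∑ i ∈ Finset.Iic j, relEnt (collideLaw p i j)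
      ≤ c1 * (relEnt p - α * expCondEnt p ((j : ℕ))) := by
    have hr : c1 * (relEnt p - α * expCondEnt p ((j : ℕ)))
        = c1 * relEnt p - c1 * (α * expCondEnt p ((j : ℕ))) := by ring
    linarith [main]
  calc (1 / (((j:ℕ) : ℝ) + 1)) * ∑ i ∈ Finset.Iic j, relEnt (collideLaw p i j)
      ≤ (1 / c1) * (c1 * (relEnt p - α * expCondEnt p ((j : ℕ)))) := by
        rw [hc1]
        apply mul_le_mul_of_nonneg_left hfin (by positivity)
    _ = relEnt p - α * expCondEnt p ((j : ℕ)) := by field_simp
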